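/- arXiv:2112.12451 — 2 statements merged into one kernel-verified Lean document; each statement's English description precedes it below -/
import Mathlib

section
/- Let X be a compact metric space, T : X → X continuous, Λ ⊆ M(X,T) nonempty compact, A ∈ C(X, GL_d(ℝ)), and (A_k) a sequence in C(X, GL_d(ℝ)) with ρ(A_k, A) → 0 and β^Λ(A_k) → β^Λ(A). If μ_k ∈ M^Λ_max(A_k) for each k and μ is a weak-* limit point of (μ_k), then μ ∈ M^Λ_max(A). -/
open MeasureTheory Topology Filter Set

noncomputable section

/-- Operator space of d×d real matrices, realized as continuous linear endomorphisms
of Euclidean space with the operator norm. -/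
abbrev Md (d : ℕ) := EuclideanSpace ℝ (Fin d) →L[ℝ] EuclideanSpace ℝ (Fin d)

/-- The space `C(X, GL_d(ℝ))` of continuous `GL_d(ℝ)`-valued maps, encoded as pairs
`(A, A⁻¹)` of continuous matrix-valued maps that are pointwise mutually inverse.
The metric (inherited from the product of sup metrics) induces the same topology as
`ρ(A,B) = max_x (‖A x - B x‖ + ‖A x⁻¹ - B x⁻¹‖)`. -/
def GLC (X : Type*) [TopologicalSpace X] (d : ℕ) : Type _ :=
  {p : C(X, Md d) × C(X, Md d) // ∀ x, p.1 x * p.2 x = 1 ∧ p.2 x * p.1 x = 1}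

instance (X : Type*) [TopologicalSpace X] [CompactSpace X] (d : ℕ) :
    MetricSpace (GLC X d) := by
  delta GLC; infer_instance

/-- The metric ρ of the paper. -/
def rho {X : Type*} [TopologicalSpace X] [CompactSpace X] {d : ℕ} (A B : GLC X d) : ℝ :=
  ⨆ x : X, (‖A.1.1 x - B.1.1 x‖ + ‖A.1.2 x - B.1.2 x‖)

/-- The cocycle `A(n,x) = A(T^{n-1} x) ⋯ A(x)`. -/
def coc {X : Type*} [TopologicalSpace X] {d : ℕ} (T : X → X) (A : GLC X d) :
    ℕ → X → Md d
  | 0, _ => 1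
  | n + 1, x => coc T A n (T x) * A.1.1 x

/-- The average `(1/n) ∫ log ‖A(n,x)‖ dμ`. -/
def lyapAvg {X : Type*} [TopologicalSpace X] [MeasurableSpace X] {d : ℕ}
    (T : X → X) (A : GLC X d) (μ : ProbabilityMeasure X) (n : ℕ) : ℝ :=
  (n : ℝ)⁻¹ * ∫ x, Real.log ‖coc T A n x‖ ∂(μ : Measure X)

/-- `inf_{n ≥ 1} (1/n) ∫ log ‖A(n,x)‖ dμ`. -/
def lyapExp {X : Type*} [TopologicalSpace X] [MeasurableSpace X] {d : ℕ}
    (T : X → X) (A : GLC X d) (μ : ProbabilityMeasure X) : ℝ :=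
  ⨅ n : {n : ℕ // 1 ≤ n}, lyapAvg T A μ n

/-- `β^Λ(A)`, the maximum ergodic average over Λ. -/
def betaL {X : Type*} [TopologicalSpace X] [MeasurableSpace X] {d : ℕ}
    (T : X → X) (Λ : Set (ProbabilityMeasure X)) (A : GLC X d) : ℝ :=
  ⨆ μ : Λ, lyapExp T A μ

/-- `M^Λ_max(A)`, the set of maximizing measures over Λ. -/
def MmaxL {X : Type*} [TopologicalSpace X] [MeasurableSpace X] {d : ℕ}
    (T : X → X) (Λ : Set (ProbabilityMeasure X)) (A : GLC X d) :
    Set (ProbabilityMeasure X) :=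
  {μ | μ ∈ Λ ∧ lyapExp T A μ = betaL T Λ A}

/-- The set of T-invariant Borel probability measures `M(X,T)`. -/
def invM {X : Type*} [TopologicalSpace X] [MeasurableSpace X]
    (T : X → X) : Set (ProbabilityMeasure X) :=
  {μ | (μ : Measure X).map T = (μ : Measure X)}

set_option synthInstance.maxHeartbeats 1000000 in
/-- The scaled cocycle `x ↦ e^{g x} A(x)`. -/
def scale {X : Type*} [TopologicalSpace X] {d : ℕ} (g : C(X, ℝ)) (A : GLC X d) :
    GLC X d :=
  ⟨(⟨fun x => Real.exp (g x) • A.1.1 x, by fun_prop⟩,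
    ⟨fun x => Real.exp (-(g x)) • A.1.2 x, by fun_prop⟩), by
    intro x
    obtain ⟨h1, h2⟩ := A.2 x
    constructor <;>
      · dsimp only [ContinuousMap.coe_mk]
        ext v
        have hv1 := congrFun (congrArg DFunLike.coe h1) v
        have hv2 := congrFun (congrArg DFunLike.coe h2) v
        simp only [ContinuousLinearMap.mul_apply, ContinuousLinearMap.one_apply]
          at hv1 hv2 ⊢
        simp only [ContinuousLinearMap.smul_apply, _root_.map_smul, smul_smul]
        simp [hv1, hv2, ← mul_assoc, ← Real.exp_add]⟩

/-- The identity cocycle `x ↦ I_d`. -/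
def idC (X : Type*) [TopologicalSpace X] (d : ℕ) : GLC X d :=
  ⟨(ContinuousMap.const X 1, ContinuousMap.const X 1), fun _ => by simp⟩

/-- The set of Lyapunov-irregular points of A. -/
def LI {X : Type*} [TopologicalSpace X] {d : ℕ} (T : X → X) (A : GLC X d) : Set X :=
  {x | ¬ ∃ c : ℝ, Tendsto (fun n : ℕ => (n : ℝ)⁻¹ * Real.log ‖coc T A n x‖)
    atTop (𝓝 c)}


section Aux

lemma logSubLogLe {a b c : ℝ} (hc : 0 < c) (ha : c ≤ a) (hb : c ≤ b) :
    Real.log a - Real.log b ≤ |a - b| / c := by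
  have ha0 : 0 < a := hc.trans_le ha
  have hb0 : 0 < b := hc.trans_le hb
  rw [← Real.log_div ha0.ne' hb0.ne']
  have h2 : Real.log (a/b) ≤ a/b - 1 := Real.log_le_sub_one_of_pos (div_pos ha0 hb0)
  have h3 : a/b - 1 = (a-b)/b := by field_simp
  calc Real.log (a/b) ≤ (a-b)/b := by rw [← h3]; exact h2
    _ ≤ |a-b|/b := by gcongr; exact le_abs_self _
    _ ≤ |a-b|/c := div_le_div_of_nonneg_left (abs_nonneg _) hc hb

lemma absLogSubLogLe {a b c : ℝ} (hc : 0 < c) (ha : c ≤ a) (hb : c ≤ b) :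
    |Real.log a - Real.log b| ≤ |a - b| / c := by
  rw [abs_sub_le_iff]
  refine ⟨logSubLogLe hc ha hb, ?_⟩
  rw [abs_sub_comm]
  exact logSubLogLe hc hb ha

lemma logLeOfLe {y c : ℝ} (hy : 0 ≤ y) (hc : y ≤ c) : Real.log y ≤ c := by
  rcases hy.eq_or_lt with h | h
  · rw [← h, Real.log_zero]; linarith
  · linarith [Real.log_le_sub_one_of_pos h]

variable {X : Type*} [TopologicalSpace X] {d : ℕ}

/-- The inverse cocycle. -/
def invcoc (T : X → X) (A : GLC X d) : ℕ → X → Md d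
  | 0, _ => 1
  | n + 1, x => A.1.2 x * invcoc T A n (T x)

lemma coc_succ (T : X → X) (A : GLC X d) (n : ℕ) (x : X) :
    coc T A (n+1) x = coc T A n (T x) * A.1.1 x := rfl

lemma coc_mul_invcoc (T : X → X) (A : GLC X d) (n : ℕ) (x : X) :
    coc T A n x * invcoc T A n x = 1 := by
  induction n generalizing x with
  | zero => simp [coc, invcoc]
  | succ n ih =>
    show (coc T A n (T x) * A.1.1 x) * (A.1.2 x * invcoc T A n (T x)) = 1
    rw [mul_assoc, ← mul_assoc (A.1.1 x), (A.2 x).1, one_mul, ih]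

lemma continuous_coc {T : X → X} (hT : Continuous T) (A : GLC X d) (n : ℕ) :
    Continuous (coc T A n) := by
  induction n with
  | zero => exact continuous_const
  | succ n ih =>
    have : (coc T A (n+1)) = fun x => coc T A n (T x) * A.1.1 x := rfl
    rw [this]
    exact (ih.comp hT).mul A.1.1.continuous

variable [CompactSpace X]

lemma norm_coc_le (T : X → X) (A : GLC X d) (n : ℕ) (x : X) :
    ‖coc T A n x‖ ≤ ‖A.1.1‖ ^ n := by
  induction n generalizing x with
  | zero =>
    have h0 : coc T A 0 x = 1 := rfl
    rw [h0, pow_zero, ContinuousLinearMap.one_def]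
    exact ContinuousLinearMap.norm_id_le
  | succ n ih =>
    rw [coc_succ]
    calc ‖coc T A n (T x) * A.1.1 x‖ ≤ ‖coc T A n (T x)‖ * ‖A.1.1 x‖ := norm_mul_le _ _
      _ ≤ ‖A.1.1‖ ^ n * ‖A.1.1‖ :=
          mul_le_mul (ih _) (A.1.1.norm_coe_le_norm x) (norm_nonneg _)
            (pow_nonneg (norm_nonneg (A.1.1)) n)
      _ = ‖A.1.1‖ ^ (n+1) := (pow_succ _ n).symm

lemma norm_invcoc_le (T : X → X) (A : GLC X d) (n : ℕ) (x : X) :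
    ‖invcoc T A n x‖ ≤ ‖A.1.2‖ ^ n := by
  induction n generalizing x with
  | zero =>
    have h0 : invcoc T A 0 x = 1 := rfl
    rw [h0, pow_zero, ContinuousLinearMap.one_def]
    exact ContinuousLinearMap.norm_id_le
  | succ n ih =>
    show ‖A.1.2 x * invcoc T A n (T x)‖ ≤ _
    calc ‖A.1.2 x * invcoc T A n (T x)‖ ≤ ‖A.1.2 x‖ * ‖invcoc T A n (T x)‖ := norm_mul_le _ _
      _ ≤ ‖A.1.2‖ * ‖A.1.2‖ ^ n :=
          mul_le_mul (A.1.2.norm_coe_le_norm x) (ih _) (norm_nonneg _) (norm_nonneg (A.1.2))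
      _ = ‖A.1.2‖ ^ (n+1) := (pow_succ' _ n).symm

variable [Nontrivial (EuclideanSpace ℝ (Fin d))]

lemma coc_norm_lower (T : X → X) (A : GLC X d) (n : ℕ) (x : X) :
    ((max 1 ‖A.1.2‖) ^ n)⁻¹ ≤ ‖coc T A n x‖ := by
  set Q : ℝ := max 1 ‖A.1.2‖ with hQdef
  have hQ1 : (1:ℝ) ≤ Q := le_max_left _ _
  have hQn : (0:ℝ) < Q ^ n := pow_pos (lt_of_lt_of_le one_pos hQ1) n
  have h1 : (1:ℝ) ≤ ‖coc T A n x‖ * ‖invcoc T A n x‖ := by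
    have : ‖(1 : Md d)‖ = 1 := by
      rw [ContinuousLinearMap.one_def]; exact ContinuousLinearMap.norm_id
    calc (1:ℝ) = ‖(1 : Md d)‖ := this.symm
      _ = ‖coc T A n x * invcoc T A n x‖ := by rw [coc_mul_invcoc]
      _ ≤ _ := norm_mul_le _ _
  have h2 : ‖invcoc T A n x‖ ≤ Q ^ n :=
    (norm_invcoc_le T A n x).trans
      (pow_le_pow_left₀ (norm_nonneg (A.1.2)) (le_max_right _ _) n)
  have h3 : (1:ℝ) ≤ ‖coc T A n x‖ * Q ^ n :=
    h1.trans (mul_le_mul_of_nonneg_left h2 (norm_nonneg _))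
  have h4 := mul_le_mul_of_nonneg_left h3 (inv_nonneg.mpr hQn.le)
  rw [mul_one] at h4
  calc (Q ^ n)⁻¹ ≤ (Q^n)⁻¹ * (‖coc T A n x‖ * Q ^ n) := h4
    _ = ‖coc T A n x‖ := by field_simp [mul_comm]

lemma coc_norm_pos (T : X → X) (A : GLC X d) (n : ℕ) (x : X) :
    0 < ‖coc T A n x‖ :=
  lt_of_lt_of_le (inv_pos.mpr (pow_pos (lt_of_lt_of_le one_pos (le_max_left _ _)) n))
    (coc_norm_lower T A n x)

lemma continuous_logcoc {T : X → X} (hT : Continuous T) (A : GLC X d) (n : ℕ) :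
    Continuous fun x => Real.log ‖coc T A n x‖ :=
  Continuous.log ((continuous_coc hT A n).norm) (fun x => (coc_norm_pos T A n x).ne')

end Aux
section Aux2

variable {X : Type*} [TopologicalSpace X] [CompactSpace X] [MeasurableSpace X]
  [OpensMeasurableSpace X] {d : ℕ}

lemma integrable_of_cont (f : X → ℝ) (hf : Continuous f) (μ : ProbabilityMeasure X) :
    Integrable f (μ : Measure X) := by
  exact (BoundedContinuousFunction.mkOfCompact ⟨f, hf⟩).integrable (μ : Measure X)

variable [Nontrivial (EuclideanSpace ℝ (Fin d))]

lemma lyapAvg_ge {T : X → X} (hT : Continuous T) (A : GLC X d) (μ : ProbabilityMeasure X)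
    (n : ℕ) (hn : 1 ≤ n) : -Real.log (max 1 ‖A.1.2‖) ≤ lyapAvg T A μ n := by
  set Q : ℝ := max 1 ‖A.1.2‖ with hQdef
  have hQ1 : (1:ℝ) ≤ Q := le_max_left _ _
  have hQ0 : (0:ℝ) < Q := lt_of_lt_of_le one_pos hQ1
  have hn0 : (0:ℝ) < (n:ℝ) := by exact_mod_cast hn
  have hbound : ∀ x, -((n:ℝ) * Real.log Q) ≤ Real.log ‖coc T A n x‖ := by
    intro x
    have h1 : ((Q:ℝ) ^ n)⁻¹ ≤ ‖coc T A n x‖ := coc_norm_lower T A n x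
    have h2 := Real.log_le_log (inv_pos.mpr (pow_pos hQ0 n)) h1
    rwa [Real.log_inv, Real.log_pow] at h2
  have hint : Integrable (fun x => Real.log ‖coc T A n x‖) (μ : Measure X) :=
    integrable_of_cont _ (continuous_logcoc hT A n) μ
  have hI : -((n:ℝ) * Real.log Q) ≤ ∫ x, Real.log ‖coc T A n x‖ ∂(μ : Measure X) := by
    have := integral_mono (integrable_const (-((n:ℝ) * Real.log Q))) hint hbound
    simpa using this
  have := mul_le_mul_of_nonneg_left hI (inv_nonneg.mpr hn0.le)
  calc -Real.log Q = (n:ℝ)⁻¹ * -((n:ℝ) * Real.log Q) := by field_simp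
    _ ≤ lyapAvg T A μ n := this

lemma bddBelow_lyapAvg {T : X → X} (hT : Continuous T) (A : GLC X d)
    (μ : ProbabilityMeasure X) :
    BddBelow (Set.range fun n : {n : ℕ // 1 ≤ n} => lyapAvg T A μ n) := by
  refine ⟨-Real.log (max 1 ‖A.1.2‖), ?_⟩
  rintro r ⟨n, rfl⟩
  exact lyapAvg_ge hT A μ n n.2

lemma lyapExp_le_lyapAvg {T : X → X} (hT : Continuous T) (A : GLC X d)
    (μ : ProbabilityMeasure X) (n : ℕ) (hn : 1 ≤ n) :
    lyapExp T A μ ≤ lyapAvg T A μ n :=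
  ciInf_le (bddBelow_lyapAvg hT A μ) ⟨n, hn⟩

lemma lyapExp_le_normbound {T : X → X} (hT : Continuous T) (A : GLC X d)
    (μ : ProbabilityMeasure X) : lyapExp T A μ ≤ ‖A.1.1‖ := by
  refine (lyapExp_le_lyapAvg hT A μ 1 le_rfl).trans ?_
  have hcoc1 : ∀ x, coc T A 1 x = A.1.1 x := fun x => one_mul _
  have hb : ∀ x, Real.log ‖coc T A 1 x‖ ≤ ‖A.1.1‖ := by
    intro x
    rw [hcoc1 x]
    exact logLeOfLe (norm_nonneg _) (A.1.1.norm_coe_le_norm x)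
  have hint : Integrable (fun x => Real.log ‖coc T A 1 x‖) (μ : Measure X) :=
    integrable_of_cont _ (continuous_logcoc hT A 1) μ
  have hI : ∫ x, Real.log ‖coc T A 1 x‖ ∂(μ : Measure X) ≤ ‖A.1.1‖ := by
    have := integral_mono hint (integrable_const ‖A.1.1‖) hb
    simpa using this
  simpa [lyapAvg] using hI

lemma bddAbove_lyapExp {T : X → X} (hT : Continuous T) (A : GLC X d)
    (Λ : Set (ProbabilityMeasure X)) :
    BddAbove (Set.range fun ν : Λ => lyapExp T A (ν : ProbabilityMeasure X)) := by
  refine ⟨‖A.1.1‖, ?_⟩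
  rintro r ⟨ν, rfl⟩
  exact lyapExp_le_normbound hT A ν

end Aux2
section Aux3

open Filter

variable {X : Type*} [TopologicalSpace X] [CompactSpace X] {d : ℕ}

lemma norm_fst_le_rho (B C : GLC X d) (x : X) : ‖B.1.1 x - C.1.1 x‖ ≤ rho B C := by
  have hcont : Continuous fun y => ‖B.1.1 y - C.1.1 y‖ + ‖B.1.2 y - C.1.2 y‖ := by
    exact ((B.1.1.continuous.sub C.1.1.continuous).norm).add
      ((B.1.2.continuous.sub C.1.2.continuous).norm)
  have hbdd : BddAbove (Set.range fun y => ‖B.1.1 y - C.1.1 y‖ + ‖B.1.2 y - C.1.2 y‖) :=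
    (isCompact_range hcont).bddAbove
  calc ‖B.1.1 x - C.1.1 x‖ ≤ ‖B.1.1 x - C.1.1 x‖ + ‖B.1.2 x - C.1.2 x‖ := by
        linarith [norm_nonneg (B.1.2 x - C.1.2 x)]
    _ ≤ rho B C := le_ciSup hbdd x

lemma coc_close {T : X → X} (hT : Continuous T) (A : GLC X d) (Aseq : ℕ → GLC X d)
    (h1 : ∀ ε > 0, ∀ᶠ k in atTop, ∀ x, ‖(Aseq k).1.1 x - A.1.1 x‖ < ε) (n : ℕ) :
    ∀ ε > 0, ∀ᶠ k in atTop, ∀ x, ‖coc T (Aseq k) n x - coc T A n x‖ < ε := by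
  induction n with
  | zero =>
    intro ε hε
    filter_upwards with k x
    have h0 : coc T (Aseq k) 0 x - coc T A 0 x = 0 := sub_self 1
    rw [h0, norm_zero]; exact hε
  | succ n ih =>
    intro ε hε
    set M : ℝ := ‖A.1.1‖ + 1 with hMdef
    set C : ℝ := ‖A.1.1‖ ^ n with hCdef
    have hM : (0:ℝ) < M := by positivity
    have hC : (0:ℝ) ≤ C := by positivity
    set D : ℝ := M + C + 1 with hDdef
    have hD : (0:ℝ) < D := by positivity
    set δ : ℝ := min (ε / D) 1 with hδdef
    have hδ : 0 < δ := lt_min (by positivity) one_pos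
    filter_upwards [ih δ hδ, h1 δ hδ] with k hk1 hk2
    intro x
    have e : coc T (Aseq k) (n+1) x - coc T A (n+1) x =
        (coc T (Aseq k) n (T x) - coc T A n (T x)) * (Aseq k).1.1 x
          + coc T A n (T x) * ((Aseq k).1.1 x - A.1.1 x) := by
      rw [coc_succ, coc_succ, sub_mul, mul_sub]
      abel
    have hAk : ‖(Aseq k).1.1 x‖ ≤ M := by
      have h7 : (Aseq k).1.1 x = A.1.1 x + ((Aseq k).1.1 x - A.1.1 x) := by abel
      calc ‖(Aseq k).1.1 x‖ = ‖A.1.1 x + ((Aseq k).1.1 x - A.1.1 x)‖ := by rw [← h7]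
        _ ≤ ‖A.1.1 x‖ + ‖(Aseq k).1.1 x - A.1.1 x‖ := norm_add_le _ _
        _ ≤ ‖A.1.1‖ + 1 := add_le_add (A.1.1.norm_coe_le_norm x)
            (le_trans (hk2 x).le (min_le_right _ _))
    have hnorm : ‖coc T (Aseq k) (n+1) x - coc T A (n+1) x‖ ≤ δ * M + C * δ := by
      rw [e]
      calc ‖_ + _‖ ≤ ‖(coc T (Aseq k) n (T x) - coc T A n (T x)) * (Aseq k).1.1 x‖
            + ‖coc T A n (T x) * ((Aseq k).1.1 x - A.1.1 x)‖ := norm_add_le _ _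
        _ ≤ ‖coc T (Aseq k) n (T x) - coc T A n (T x)‖ * ‖(Aseq k).1.1 x‖
            + ‖coc T A n (T x)‖ * ‖(Aseq k).1.1 x - A.1.1 x‖ :=
              add_le_add (norm_mul_le _ _) (norm_mul_le _ _)
        _ ≤ δ * M + C * δ := add_le_add
            (mul_le_mul (hk1 (T x)).le hAk (norm_nonneg _) hδ.le)
            (mul_le_mul (norm_coc_le T A n (T x)) (hk2 x).le (norm_nonneg _) hC)
    have h5 : δ * (M + C) ≤ (ε / D) * (M + C) :=
      mul_le_mul_of_nonneg_right (min_le_left _ _) (by positivity)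
    have h6 : (ε / D) * (M + C) < ε := by
      rw [div_mul_eq_mul_div, div_lt_iff₀ hD]
      nlinarith
    calc ‖coc T (Aseq k) (n+1) x - coc T A (n+1) x‖ ≤ δ * M + C * δ := hnorm
      _ = δ * (M + C) := by ring
      _ < ε := lt_of_le_of_lt h5 h6

lemma logcoc_close {T : X → X} [Nontrivial (EuclideanSpace ℝ (Fin d))]
    (hT : Continuous T) (A : GLC X d) (Aseq : ℕ → GLC X d)
    (h1 : ∀ ε > 0, ∀ᶠ k in atTop, ∀ x, ‖(Aseq k).1.1 x - A.1.1 x‖ < ε) (n : ℕ) :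
    ∀ ε > 0, ∀ᶠ k in atTop, ∀ x,
      |Real.log ‖coc T (Aseq k) n x‖ - Real.log ‖coc T A n x‖| ≤ ε := by
  intro ε hε
  set c : ℝ := ((max 1 ‖A.1.2‖) ^ n)⁻¹ with hcdef
  have hc : 0 < c := by
    rw [hcdef]
    have : (0:ℝ) < max 1 ‖A.1.2‖ := lt_of_lt_of_le one_pos (le_max_left _ _)
    positivity
  set δ : ℝ := min (c/2) (ε * (c/2)) with hδdef
  have hδ : 0 < δ := lt_min (by positivity) (by positivity)
  filter_upwards [coc_close hT A Aseq h1 n δ hδ] with k hk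
  intro x
  have hlow : c ≤ ‖coc T A n x‖ := coc_norm_lower T A n x
  have hdiff : |‖coc T (Aseq k) n x‖ - ‖coc T A n x‖| ≤ δ :=
    (abs_norm_sub_norm_le _ _).trans (hk x).le
  have hlowk : c/2 ≤ ‖coc T (Aseq k) n x‖ := by
    have := abs_le.mp hdiff
    have hδ2 : δ ≤ c/2 := min_le_left _ _
    linarith [this.1]
  have := absLogSubLogLe (by positivity : (0:ℝ) < c/2) hlowk (by linarith : c/2 ≤ ‖coc T A n x‖)
  refine this.trans ?_
  have hδ3 : δ ≤ ε * (c/2) := min_le_right _ _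
  rw [div_le_iff₀ (by positivity : (0:ℝ) < c/2)]
  calc |‖coc T (Aseq k) n x‖ - ‖coc T A n x‖| ≤ δ := hdiff
    _ ≤ ε * (c/2) := hδ3

end Aux3
lemma integral_close {X : Type*} [MeasurableSpace X] (μ : Measure X) [IsProbabilityMeasure μ]
    {f g : X → ℝ} (hf : Integrable f μ) (hg : Integrable g μ) {ε : ℝ}
    (h : ∀ x, |f x - g x| ≤ ε) : |∫ x, f x ∂μ - ∫ x, g x ∂μ| ≤ ε := by
  rw [← integral_sub hf hg, ← Real.norm_eq_abs]
  calc ‖∫ x, (f x - g x) ∂μ‖ ≤ ε * (μ Set.univ).toReal := by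
        apply norm_integral_le_of_norm_le_const
        filter_upwards with x using by simpa using h x
    _ = ε := by simp
/-- If `ρ(A_k, A) → 0`, `β^Λ(A_k) → β^Λ(A)`, `μ_k ∈ M^Λ_max(A_k)`, and `μ` is a
weak-* limit point of `(μ_k)`, then `μ ∈ M^Λ_max(A)`. -/
theorem stmt4 {X : Type*} [MetricSpace X] [CompactSpace X] [MeasurableSpace X] [BorelSpace X]
    {d : ℕ} (T : X → X) (hT : Continuous T)
    (Λ : Set (MeasureTheory.ProbabilityMeasure X))
    (hne : Λ.Nonempty) (hcomp : IsCompact Λ) (hinv : Λ ⊆ invM T)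
    (A : GLC X d) (Aseq : ℕ → GLC X d)
    (hρ : Tendsto (fun k => rho (Aseq k) A) atTop (𝓝 0))
    (hβ : Tendsto (fun k => betaL T Λ (Aseq k)) atTop (𝓝 (betaL T Λ A)))
    (μseq : ℕ → MeasureTheory.ProbabilityMeasure X)
    (hmax : ∀ k, μseq k ∈ MmaxL T Λ (Aseq k))
    (μ : MeasureTheory.ProbabilityMeasure X)
    (hclust : MapClusterPt μ atTop μseq) :
    μ ∈ MmaxL T Λ A := by
  haveI := μ.nonempty
  have hΛmem : ∀ k, μseq k ∈ Λ := fun k => (hmax k).1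
  have hμΛ : μ ∈ Λ := by
    have hc : ClusterPt μ (Filter.map μseq atTop) := hclust
    have h1 : ClusterPt μ (Filter.principal Λ) :=
      hc.mono (le_principal_iff.mpr (mem_map.mpr (Eventually.of_forall hΛmem)))
    have h2 := mem_closure_iff_clusterPt.mpr h1
    rwa [hcomp.isClosed.closure_eq] at h2
  rcases Nat.eq_zero_or_pos d with hd | hd
  · subst hd
    haveI : Subsingleton (EuclideanSpace ℝ (Fin 0)) := ⟨fun a b => PiLp.ext fun i => i.elim0⟩
    haveI : Subsingleton (Md 0) :=
      ⟨fun f g => ContinuousLinearMap.ext fun v => Subsingleton.elim _ _⟩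
    haveI : Nonempty {n : ℕ // 1 ≤ n} := ⟨⟨1, le_refl 1⟩⟩
    have hz : ∀ (B : GLC X 0) (ν : MeasureTheory.ProbabilityMeasure X), lyapExp T B ν = 0 := by
      intro B ν
      have havg : ∀ n : ℕ, lyapAvg T B ν n = 0 := by
        intro n
        have hlog : ∀ x, Real.log ‖coc T B n x‖ = 0 := by
          intro x
          have h0 : coc T B n x = 0 := Subsingleton.elim _ _
          rw [h0, norm_zero, Real.log_zero]
        simp only [lyapAvg, hlog, integral_zero, mul_zero]
      simp only [lyapExp, havg, ciInf_const]
    haveI : Nonempty Λ := hne.to_subtype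
    have hβ0 : betaL T Λ A = 0 := by simp only [betaL, hz, ciSup_const]
    exact ⟨hμΛ, by rw [hz A μ, hβ0]⟩
  · haveI : Nonempty (Fin d) := ⟨⟨0, hd⟩⟩
    haveI : Nontrivial (EuclideanSpace ℝ (Fin d)) := inferInstance
    have h1 : ∀ ε > 0, ∀ᶠ k in atTop, ∀ x, ‖(Aseq k).1.1 x - A.1.1 x‖ < ε := by
      intro ε hε
      filter_upwards [hρ.eventually (gt_mem_nhds hε)] with k hk x
      exact lt_of_le_of_lt (norm_fst_le_rho _ _ x) hk
    have key : ∀ n : ℕ, 1 ≤ n →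
        (n : ℝ) * betaL T Λ A ≤ ∫ x, Real.log ‖coc T A n x‖ ∂(μ : Measure X) := by
      intro n hn
      have hn0 : (0:ℝ) < n := by exact_mod_cast hn
      refine le_of_forall_pos_le_add ?_
      intro ε hε
      have hε3 : (0:ℝ) < ε / 3 := by linarith
      set f : BoundedContinuousFunction X ℝ :=
        BoundedContinuousFunction.mkOfCompact
          ⟨fun x => Real.log ‖coc T A n x‖, continuous_logcoc hT A n⟩ with hfdef
      set F : MeasureTheory.ProbabilityMeasure X → ℝ :=
        fun ν => ∫ x, f x ∂(ν : Measure X) with hFdef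
      have hFcont : Continuous F :=
        MeasureTheory.ProbabilityMeasure.continuous_integral_boundedContinuousFunction f
      have hFeq : ∀ ν : MeasureTheory.ProbabilityMeasure X,
          F ν = ∫ x, Real.log ‖coc T A n x‖ ∂(ν : Measure X) := by
        intro ν
        simp only [hFdef, hfdef, BoundedContinuousFunction.mkOfCompact_apply,
          ContinuousMap.coe_mk]
      have hfreq : ∃ᶠ k in atTop, |F (μseq k) - F μ| < ε / 3 := by
        have hopen : IsOpen {ν : MeasureTheory.ProbabilityMeasure X | |F ν - F μ| < ε/3} :=
          isOpen_lt ((hFcont.sub continuous_const).abs) continuous_const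
        exact (mapClusterPt_iff_frequently.mp hclust) _ (hopen.mem_nhds (by simp [hε3]))
      have hev1 : ∀ᶠ k in atTop, ∀ x,
          |Real.log ‖coc T (Aseq k) n x‖ - Real.log ‖coc T A n x‖| ≤ ε/3 :=
        logcoc_close hT A Aseq h1 n (ε/3) hε3
      have hev2 : ∀ᶠ k in atTop, (n:ℝ) * betaL T Λ A - ε/3 ≤ (n:ℝ) * betaL T Λ (Aseq k) := by
        have h2 : Tendsto (fun k => (n:ℝ) * betaL T Λ (Aseq k)) atTop
            (𝓝 ((n:ℝ) * betaL T Λ A)) := hβ.const_mul _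
        exact h2.eventually (eventually_ge_nhds (by linarith))
      obtain ⟨k, hk0, hk1, hk2⟩ := (hfreq.and_eventually (hev1.and hev2)).exists
      have hβk : betaL T Λ (Aseq k) ≤ lyapAvg T (Aseq k) (μseq k) n := by
        rw [← (hmax k).2]
        exact lyapExp_le_lyapAvg hT (Aseq k) (μseq k) n hn
      have hIk : (n:ℝ) * betaL T Λ (Aseq k) ≤
          ∫ x, Real.log ‖coc T (Aseq k) n x‖ ∂(μseq k : Measure X) := by
        calc (n:ℝ) * betaL T Λ (Aseq k) ≤ (n:ℝ) * lyapAvg T (Aseq k) (μseq k) n :=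
              mul_le_mul_of_nonneg_left hβk hn0.le
          _ = ∫ x, Real.log ‖coc T (Aseq k) n x‖ ∂(μseq k : Measure X) := by
              rw [lyapAvg]; field_simp
      have hint1 : Integrable (fun x => Real.log ‖coc T (Aseq k) n x‖) (μseq k : Measure X) :=
        integrable_of_cont _ (continuous_logcoc hT (Aseq k) n) _
      have hint2 : Integrable (fun x => Real.log ‖coc T A n x‖) (μseq k : Measure X) :=
        integrable_of_cont _ (continuous_logcoc hT A n) _
      have hclose : |∫ x, Real.log ‖coc T (Aseq k) n x‖ ∂(μseq k : Measure X)
          - ∫ x, Real.log ‖coc T A n x‖ ∂(μseq k : Measure X)| ≤ ε/3 :=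
        integral_close _ hint1 hint2 hk1
      have habs1 := abs_le.mp hclose
      have habs2 := abs_le.mp hk0.le
      have hFk := hFeq (μseq k)
      have hFμ := hFeq μ
      rw [hFk, hFμ] at habs2
      rw [← hFμ]
      rw [hFμ]
      linarith [habs1.1, habs2.1, hk2, hIk]
    have hle : lyapExp T A μ ≤ betaL T Λ A :=
      le_ciSup (bddAbove_lyapExp hT A Λ) (⟨μ, hμΛ⟩ : Λ)
    have hge : betaL T Λ A ≤ lyapExp T A μ := by
      refine le_ciInf ?_
      rintro ⟨n, hn⟩
      have hn0 : (0:ℝ) < n := by exact_mod_cast hn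
      have h2 := mul_le_mul_of_nonneg_left (key n hn) (inv_nonneg.mpr hn0.le)
      calc betaL T Λ A = (n:ℝ)⁻¹ * ((n:ℝ) * betaL T Λ A) := by field_simp
        _ ≤ (n:ℝ)⁻¹ * ∫ x, Real.log ‖coc T A n x‖ ∂(μ : Measure X) := h2
        _ = lyapAvg T A μ n := rfl
    exact ⟨hμΛ, le_antisymm hle hge⟩
end
end

section
/- Let X be a compact metric space, T : X → X continuous, Λ ⊆ M(X,T) nonempty compact, and f ∈ C(X). Then the function β^Λ : C(X, GL_d(ℝ)) → ℝ is continuous at the cocycle e^f I_d : x ↦ e^{f(x)} Id. -/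
open MeasureTheory Topology Filter Set

noncomputable section

section auxStmt9

open MeasureTheory Finset

private lemma md_norm_one {d : ℕ} (hd : 0 < d) : ‖(1 : Md d)‖ = 1 := by
  haveI : Nontrivial (EuclideanSpace ℝ (Fin d)) :=
    Module.nontrivial_of_finrank_pos (R := ℝ)
      (by rw [finrank_euclideanSpace_fin]; exact hd)
  exact norm_one

private lemma md_norm_smul_one {d : ℕ} (c : ℝ) :
    ‖c • (1 : Md d)‖ = |c| * ‖(1 : Md d)‖ := by
  rw [← Real.norm_eq_abs]
  exact norm_smul c (1 : Md d)

/-- The inverse cocycle. -/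
private def cocInv {X : Type*} [TopologicalSpace X] {d : ℕ} (T : X → X) (B : GLC X d) :
    ℕ → X → Md d
  | 0, _ => 1
  | n + 1, x => B.1.2 x * cocInv T B n (T x)

private lemma cocInv_mul_coc {X : Type*} [TopologicalSpace X] {d : ℕ} (T : X → X)
    (B : GLC X d) : ∀ n x, cocInv T B n x * coc T B n x = 1 := by
  intro n
  induction n with
  | zero => intro x; simp [coc, cocInv]
  | succ n ih =>
    intro x
    show (B.1.2 x * cocInv T B n (T x)) * (coc T B n (T x) * B.1.1 x) = 1
    rw [mul_assoc, ← mul_assoc (cocInv T B n (T x)), ih, one_mul, (B.2 x).2]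

private lemma coc_continuous {X : Type*} [TopologicalSpace X] {d : ℕ} {T : X → X}
    (hT : Continuous T) (B : GLC X d) (n : ℕ) : Continuous fun x => coc T B n x := by
  induction n with
  | zero => exact continuous_const
  | succ n ih =>
    show Continuous fun x => coc T B n (T x) * B.1.1 x
    exact (ih.comp hT).mul B.1.1.continuous

private lemma coc_norm_le {X : Type*} [TopologicalSpace X] {d : ℕ} (T : X → X)
    (B : GLC X d) {g : X → ℝ} (hB : ∀ x, ‖B.1.1 x‖ ≤ Real.exp (g x)) :
    ∀ n x, ‖coc T B n x‖ ≤ Real.exp (∑ i ∈ Finset.range n, g (T^[i] x)) := by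
  intro n
  induction n with
  | zero =>
    intro x
    show ‖(1 : Md d)‖ ≤ Real.exp (∑ i ∈ Finset.range 0, g (T^[i] x))
    rw [Finset.range_zero, Finset.sum_empty, Real.exp_zero, ContinuousLinearMap.one_def]
    exact ContinuousLinearMap.norm_id_le
  | succ n ih =>
    intro x
    have key : ∑ i ∈ Finset.range (n + 1), g (T^[i] x)
        = (∑ i ∈ Finset.range n, g (T^[i] (T x))) + g x := by
      rw [Finset.sum_range_succ']
      simp [Function.iterate_succ_apply]
    calc ‖coc T B (n + 1) x‖ ≤ ‖coc T B n (T x)‖ * ‖B.1.1 x‖ := norm_mul_le _ _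
      _ ≤ Real.exp (∑ i ∈ Finset.range n, g (T^[i] (T x))) * Real.exp (g x) :=
          mul_le_mul (ih (T x)) (hB x) (norm_nonneg _) (Real.exp_nonneg _)
      _ = _ := by rw [← Real.exp_add, key]

private lemma cocInv_norm_le {X : Type*} [TopologicalSpace X] {d : ℕ} (T : X → X)
    (B : GLC X d) {g : X → ℝ} (hB : ∀ x, ‖B.1.2 x‖ ≤ Real.exp (g x)) :
    ∀ n x, ‖cocInv T B n x‖ ≤ Real.exp (∑ i ∈ Finset.range n, g (T^[i] x)) := by
  intro n
  induction n with
  | zero =>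
    intro x
    show ‖(1 : Md d)‖ ≤ Real.exp (∑ i ∈ Finset.range 0, g (T^[i] x))
    rw [Finset.range_zero, Finset.sum_empty, Real.exp_zero, ContinuousLinearMap.one_def]
    exact ContinuousLinearMap.norm_id_le
  | succ n ih =>
    intro x
    have key : ∑ i ∈ Finset.range (n + 1), g (T^[i] x)
        = g x + ∑ i ∈ Finset.range n, g (T^[i] (T x)) := by
      rw [Finset.sum_range_succ']
      simp [Function.iterate_succ_apply, add_comm]
    calc ‖cocInv T B (n + 1) x‖ ≤ ‖B.1.2 x‖ * ‖cocInv T B n (T x)‖ := norm_mul_le _ _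
      _ ≤ Real.exp (g x) * Real.exp (∑ i ∈ Finset.range n, g (T^[i] (T x))) :=
          mul_le_mul (hB x) (ih (T x)) (norm_nonneg _) (Real.exp_nonneg _)
      _ = _ := by rw [← Real.exp_add, key]

private lemma le_coc_norm {X : Type*} [TopologicalSpace X] {d : ℕ} (hd : 0 < d)
    (T : X → X) (B : GLC X d) {g : X → ℝ}
    (hB : ∀ x, ‖B.1.2 x‖ ≤ Real.exp (g x)) (n : ℕ) (x : X) :
    Real.exp (-∑ i ∈ Finset.range n, g (T^[i] x)) ≤ ‖coc T B n x‖ := by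
  set S := ∑ i ∈ Finset.range n, g (T^[i] x) with hS
  have h1 : (1 : ℝ) ≤ ‖cocInv T B n x‖ * ‖coc T B n x‖ := by
    calc (1 : ℝ) = ‖(1 : Md d)‖ := (md_norm_one hd).symm
      _ = ‖cocInv T B n x * coc T B n x‖ := by rw [cocInv_mul_coc]
      _ ≤ _ := norm_mul_le _ _
  have h2 : ‖cocInv T B n x‖ ≤ Real.exp S := cocInv_norm_le T B hB n x
  have h3 : (0 : ℝ) < Real.exp S := Real.exp_pos _
  have h4 : (1 : ℝ) ≤ Real.exp S * ‖coc T B n x‖ :=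
    h1.trans (mul_le_mul_of_nonneg_right h2 (norm_nonneg _))
  have h5 := mul_le_mul_of_nonneg_left h4 (le_of_lt (inv_pos.mpr h3))
  rw [mul_one, ← mul_assoc, inv_mul_cancel₀ (ne_of_gt h3), one_mul] at h5
  rw [Real.exp_neg]
  exact h5

private lemma cont_integrable {X : Type*} [MetricSpace X] [CompactSpace X]
    [MeasurableSpace X] [BorelSpace X] (μ : ProbabilityMeasure X) (g : X → ℝ)
    (hg : Continuous g) : Integrable g (μ : Measure X) :=
  hg.integrable_of_hasCompactSupport (HasCompactSupport.of_compactSpace g)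

private lemma integral_comp_iterate {X : Type*} [MetricSpace X] [CompactSpace X]
    [MeasurableSpace X] [BorelSpace X] {T : X → X} (hT : Continuous T)
    (μ : ProbabilityMeasure X) (hμ : (μ : Measure X).map T = (μ : Measure X))
    (g : X → ℝ) (hg : Continuous g) :
    ∀ i : ℕ, ∫ x, g (T^[i] x) ∂(μ : Measure X) = ∫ x, g x ∂(μ : Measure X) := by
  intro i
  induction i with
  | zero => simp
  | succ i ih =>
    have hgi : Continuous fun x => g (T^[i] x) := hg.comp (hT.iterate i)
    have hstep : ∫ x, g (T^[i + 1] x) ∂(μ : Measure X)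
        = ∫ x, g (T^[i] (T x)) ∂(μ : Measure X) := by
      simp [Function.iterate_succ_apply]
    have hmap : ∫ y, g (T^[i] y) ∂((μ : Measure X).map T)
        = ∫ x, g (T^[i] (T x)) ∂(μ : Measure X) :=
      integral_map hT.measurable.aemeasurable
        (by rw [hμ]; exact hgi.aestronglyMeasurable)
    rw [hμ] at hmap
    rw [hstep, ← hmap, ih]

end auxStmt9

section auxStmt9b

open MeasureTheory Finset

private lemma abs_lyapAvg_sub_le {X : Type*} [MetricSpace X] [CompactSpace X]
    [MeasurableSpace X] [BorelSpace X] {d : ℕ} (hd : 0 < d) {T : X → X}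
    (hT : Continuous T) (B : GLC X d) (μ : ProbabilityMeasure X)
    (hμ : (μ : Measure X).map T = (μ : Measure X)) (f : C(X, ℝ)) {ε : ℝ}
    (hB1 : ∀ x, ‖B.1.1 x‖ ≤ Real.exp (f x + ε))
    (hB2 : ∀ x, ‖B.1.2 x‖ ≤ Real.exp (-f x + ε))
    {n : ℕ} (hn : 1 ≤ n) :
    |lyapAvg T B μ n - ∫ x, f x ∂(μ : Measure X)| ≤ ε := by
  set F := ∫ x, f x ∂(μ : Measure X) with hF
  set S := fun x => ∑ i ∈ Finset.range n, f (T^[i] x) with hSdef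
  have hNpos : (0 : ℝ) < n := by exact_mod_cast hn
  have hsum1 : ∀ x, ∑ i ∈ Finset.range n, (f (T^[i] x) + ε) = S x + n * ε := by
    intro x
    rw [Finset.sum_add_distrib, Finset.sum_const, Finset.card_range, nsmul_eq_mul]
  have hsum2 : ∀ x, ∑ i ∈ Finset.range n, (-f (T^[i] x) + ε) = -S x + n * ε := by
    intro x
    rw [Finset.sum_add_distrib, Finset.sum_const, Finset.card_range, nsmul_eq_mul,
      Finset.sum_neg_distrib]
  have hup : ∀ x, ‖coc T B n x‖ ≤ Real.exp (S x + n * ε) := by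
    intro x
    have := coc_norm_le T B (g := fun x => f x + ε) hB1 n x
    rwa [hsum1 x] at this
  have hlo : ∀ x, Real.exp (S x - n * ε) ≤ ‖coc T B n x‖ := by
    intro x
    have := le_coc_norm hd T B (g := fun x => -f x + ε) hB2 n x
    rw [hsum2 x] at this
    have he : -(-S x + n * ε) = S x - n * ε := by ring
    rwa [he] at this
  have hpos : ∀ x, 0 < ‖coc T B n x‖ := fun x => lt_of_lt_of_le (Real.exp_pos _) (hlo x)
  have hlogup : ∀ x, Real.log ‖coc T B n x‖ ≤ S x + n * ε := by
    intro x
    have := Real.log_le_log (hpos x) (hup x)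
    rwa [Real.log_exp] at this
  have hloglo : ∀ x, S x - n * ε ≤ Real.log ‖coc T B n x‖ := by
    intro x
    have := Real.log_le_log (Real.exp_pos _) (hlo x)
    rwa [Real.log_exp] at this
  have hScont : Continuous S :=
    continuous_finset_sum _ (fun i _ => f.continuous.comp (hT.iterate i))
  have hLcont : Continuous fun x => Real.log ‖coc T B n x‖ :=
    ((coc_continuous hT B n).norm).log (fun x => ne_of_gt (hpos x))
  have hLint : Integrable (fun x => Real.log ‖coc T B n x‖) (μ : Measure X) :=
    cont_integrable μ _ hLcont
  have hSint : Integrable S (μ : Measure X) := cont_integrable μ _ hScont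
  have hSeq : ∫ x, S x ∂(μ : Measure X) = n * F := by
    have hint : ∀ i ∈ Finset.range n, Integrable (fun x => f (T^[i] x)) (μ : Measure X) :=
      fun i _ => cont_integrable μ _ (f.continuous.comp (hT.iterate i))
    rw [hSdef]
    rw [integral_finset_sum _ hint]
    have heach : ∀ i ∈ Finset.range n, ∫ x, f (T^[i] x) ∂(μ : Measure X) = F :=
      fun i _ => integral_comp_iterate hT μ hμ f f.continuous i
    rw [Finset.sum_congr rfl heach, Finset.sum_const, Finset.card_range, nsmul_eq_mul]
  set I := ∫ x, Real.log ‖coc T B n x‖ ∂(μ : Measure X) with hI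
  have hIle : I ≤ n * F + n * ε := by
    have h := integral_mono hLint (hSint.add (integrable_const _)) hlogup
    simp only [Pi.add_apply] at h
    rwa [integral_add hSint (integrable_const _), integral_const, hSeq,
      probReal_univ, smul_eq_mul, one_mul] at h
  have hIge : n * F - n * ε ≤ I := by
    have h := integral_mono (hSint.sub (integrable_const _)) hLint hloglo
    simp only [Pi.sub_apply] at h
    rwa [integral_sub hSint (integrable_const _), integral_const, hSeq,
      probReal_univ, smul_eq_mul, one_mul] at h
  have hlyap : lyapAvg T B μ n = (n : ℝ)⁻¹ * I := rfl
  have hne : (n : ℝ) ≠ 0 := ne_of_gt hNpos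
  have e1 : (n : ℝ)⁻¹ * (n * F + n * ε) = F + ε := by field_simp
  have e2 : (n : ℝ)⁻¹ * (n * F - n * ε) = F - ε := by field_simp
  have h1 : (n : ℝ)⁻¹ * I ≤ F + ε := by
    rw [← e1]; exact mul_le_mul_of_nonneg_left hIle (by positivity)
  have h2 : F - ε ≤ (n : ℝ)⁻¹ * I := by
    rw [← e2]; exact mul_le_mul_of_nonneg_left hIge (by positivity)
  rw [hlyap, abs_le]
  constructor <;> linarith

private lemma lyapExp_bounds {X : Type*} [MetricSpace X] [CompactSpace X]
    [MeasurableSpace X] [BorelSpace X] {d : ℕ} (hd : 0 < d) {T : X → X}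
    (hT : Continuous T) (B : GLC X d) (μ : ProbabilityMeasure X)
    (hμ : (μ : Measure X).map T = (μ : Measure X)) (f : C(X, ℝ)) {ε : ℝ}
    (hB1 : ∀ x, ‖B.1.1 x‖ ≤ Real.exp (f x + ε))
    (hB2 : ∀ x, ‖B.1.2 x‖ ≤ Real.exp (-f x + ε)) :
    (∫ x, f x ∂(μ : Measure X)) - ε ≤ lyapExp T B μ ∧
      lyapExp T B μ ≤ (∫ x, f x ∂(μ : Measure X)) + ε := by
  set F := ∫ x, f x ∂(μ : Measure X) with hF
  have key : ∀ p : {n : ℕ // 1 ≤ n},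
      F - ε ≤ lyapAvg T B μ p ∧ lyapAvg T B μ p ≤ F + ε := by
    intro p
    have h := abs_le.mp (abs_lyapAvg_sub_le hd hT B μ hμ f hB1 hB2 p.2)
    exact ⟨by linarith [h.1], by linarith [h.2]⟩
  have hbdd : BddBelow (Set.range fun p : {n : ℕ // 1 ≤ n} => lyapAvg T B μ p) := by
    refine ⟨F - ε, ?_⟩
    rintro y ⟨p, rfl⟩
    exact (key p).1
  constructor
  · exact le_ciInf fun p => (key p).1
  · exact le_trans (ciInf_le hbdd ⟨1, le_rfl⟩) (key ⟨1, le_rfl⟩).2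

end auxStmt9b

section mainStmt9

open MeasureTheory

private lemma glc_dist_eq {X : Type*} [TopologicalSpace X] [CompactSpace X] {d : ℕ}
    (A B : GLC X d) : dist A B = max (dist A.1.1 B.1.1) (dist A.1.2 B.1.2) := rfl

end mainStmt9


/-- `β^Λ` is continuous at every cocycle of the form `x ↦ e^{f(x)} I_d`. -/
theorem stmt9 {X : Type*} [MetricSpace X] [CompactSpace X] [MeasurableSpace X] [BorelSpace X]
    {d : ℕ} (T : X → X) (hT : Continuous T)
    (Λ : Set (MeasureTheory.ProbabilityMeasure X))
    (hne : Λ.Nonempty) (hcomp : IsCompact Λ) (hinv : Λ ⊆ invM T)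
    (f : C(X, ℝ)) :
    ContinuousAt (betaL T Λ (d := d)) (scale f (idC X d)) := by
  rcases Nat.eq_zero_or_pos d with rfl | hd
  · -- d = 0 : everything is trivial, betaL is constant
    have hconst : (betaL T Λ (d := 0)) = fun _ => betaL T Λ (idC X 0) := by
      funext B
      have h : ∀ n x, coc T B n x = coc T (idC X 0) n x := fun _ _ => Subsingleton.elim _ _
      unfold betaL lyapExp lyapAvg
      simp only [h]
    rw [hconst]
    exact continuousAt_const
  · set A₀ := scale f (idC X d) with hA₀
    have hA1n : ∀ x, ‖A₀.1.1 x‖ = Real.exp (f x) := by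
      intro x
      show ‖Real.exp (f x) • ((ContinuousMap.const X (1:Md d)) x)‖ = _
      rw [ContinuousMap.const_apply, md_norm_smul_one, md_norm_one hd, mul_one,
        abs_of_pos (Real.exp_pos _)]
    have hA2n : ∀ x, ‖A₀.1.2 x‖ = Real.exp (-f x) := by
      intro x
      show ‖Real.exp (-(f x)) • ((ContinuousMap.const X (1:Md d)) x)‖ = _
      rw [ContinuousMap.const_apply, md_norm_smul_one, md_norm_one hd, mul_one,
        abs_of_pos (Real.exp_pos _)]
    -- the common value of lyapExp A₀
    have hAeq : ∀ μ : ProbabilityMeasure X, μ ∈ Λ →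
        lyapExp T A₀ μ = ∫ x, f x ∂(μ : Measure X) := by
      intro μ hμΛ
      have h := lyapExp_bounds hd hT A₀ μ (hinv hμΛ) f (ε := 0)
        (fun x => by rw [hA1n x, add_zero]) (fun x => by rw [hA2n x, add_zero])
      linarith [h.1, h.2]
    rw [Metric.continuousAt_iff]
    intro ε hε
    set ε' := ε / 2 with hε'def
    have hε'pos : 0 < ε' := by positivity
    have hexp1 : (0 : ℝ) < Real.exp ε' - 1 := by
      have := Real.add_one_le_exp ε'
      linarith
    refine ⟨(Real.exp ε' - 1) * Real.exp (-‖f‖), by positivity, ?_⟩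
    intro B hdB
    set δ := (Real.exp ε' - 1) * Real.exp (-‖f‖) with hδdef
    have hfb : ∀ x : X, -‖f‖ ≤ f x ∧ f x ≤ ‖f‖ := by
      intro x
      have := ContinuousMap.norm_coe_le_norm f x
      rw [Real.norm_eq_abs] at this
      exact abs_le.mp this
    rw [glc_dist_eq] at hdB
    have hd1 : ∀ x, ‖B.1.1 x - A₀.1.1 x‖ < δ := by
      intro x
      rw [← dist_eq_norm]
      exact lt_of_le_of_lt (ContinuousMap.dist_apply_le_dist x)
        (lt_of_le_of_lt (le_max_left _ _) hdB)
    have hd2 : ∀ x, ‖B.1.2 x - A₀.1.2 x‖ < δ := by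
      intro x
      rw [← dist_eq_norm]
      exact lt_of_le_of_lt (ContinuousMap.dist_apply_le_dist x)
        (lt_of_le_of_lt (le_max_right _ _) hdB)
    have hB1 : ∀ x, ‖B.1.1 x‖ ≤ Real.exp (f x + ε') := by
      intro x
      have h1 := norm_sub_norm_le (B.1.1 x) (A₀.1.1 x)
      rw [hA1n x] at h1
      have h2 : δ ≤ (Real.exp ε' - 1) * Real.exp (f x) := by
        rw [hδdef]
        exact mul_le_mul_of_nonneg_left (Real.exp_le_exp.mpr (hfb x).1) (le_of_lt hexp1)
      have he : Real.exp (f x + ε')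
          = Real.exp (f x) + (Real.exp ε' - 1) * Real.exp (f x) := by
        rw [Real.exp_add]; ring
      linarith [hd1 x]
    have hB2 : ∀ x, ‖B.1.2 x‖ ≤ Real.exp (-f x + ε') := by
      intro x
      have h1 := norm_sub_norm_le (B.1.2 x) (A₀.1.2 x)
      rw [hA2n x] at h1
      have h2 : δ ≤ (Real.exp ε' - 1) * Real.exp (-f x) := by
        rw [hδdef]
        exact mul_le_mul_of_nonneg_left
          (Real.exp_le_exp.mpr (neg_le_neg (hfb x).2)) (le_of_lt hexp1)
      have he : Real.exp (-f x + ε')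
          = Real.exp (-f x) + (Real.exp ε' - 1) * Real.exp (-f x) := by
        rw [Real.exp_add]; ring
      linarith [hd2 x]
    -- lyapExp comparison
    have hbounds : ∀ μ : ProbabilityMeasure X, μ ∈ Λ →
        |lyapExp T B μ - lyapExp T A₀ μ| ≤ ε' := by
      intro μ hμΛ
      have h := lyapExp_bounds hd hT B μ (hinv hμΛ) f hB1 hB2
      rw [hAeq μ hμΛ, abs_le]
      exact ⟨by linarith [h.1], by linarith [h.2]⟩
    haveI hΛne : Nonempty Λ := hne.to_subtype
    have hFab : ∀ μ : Λ, |lyapExp T A₀ (μ : ProbabilityMeasure X)| ≤ ‖f‖ := by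
      intro μ
      rw [hAeq μ μ.2, ← Real.norm_eq_abs]
      have h := norm_integral_le_of_norm_le_const (μ := (μ : Measure X))
        (f := fun x => f x) (C := ‖f‖)
        (Filter.Eventually.of_forall fun x => ContinuousMap.norm_coe_le_norm f x)
      simpa [measure_univ] using h
    have hbddF : BddAbove (Set.range fun μ : Λ => lyapExp T A₀ (μ : ProbabilityMeasure X)) := by
      refine ⟨‖f‖, ?_⟩
      rintro y ⟨μ, rfl⟩
      exact le_trans (le_abs_self _) (hFab μ)
    have hbddG : BddAbove (Set.range fun μ : Λ => lyapExp T B (μ : ProbabilityMeasure X)) := by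
      refine ⟨‖f‖ + ε', ?_⟩
      rintro y ⟨μ, rfl⟩
      have h1 := (abs_le.mp (hbounds μ μ.2)).2
      have h2 := le_trans (le_abs_self _) (hFab μ)
      simp only at h1 h2 ⊢
      linarith
    have h1 : betaL T Λ B ≤ betaL T Λ A₀ + ε' := by
      unfold betaL
      apply ciSup_le
      intro μ
      have h := (abs_le.mp (hbounds μ μ.2)).2
      have h' : lyapExp T A₀ (μ : ProbabilityMeasure X)
          ≤ ⨆ ν : Λ, lyapExp T A₀ (ν : ProbabilityMeasure X) := le_ciSup hbddF μ
      linarith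
    have h2 : betaL T Λ A₀ ≤ betaL T Λ B + ε' := by
      unfold betaL
      apply ciSup_le
      intro μ
      have h := (abs_le.mp (hbounds μ μ.2)).1
      have h' : lyapExp T B (μ : ProbabilityMeasure X)
          ≤ ⨆ ν : Λ, lyapExp T B (ν : ProbabilityMeasure X) := le_ciSup hbddG μ
      linarith
    rw [Real.dist_eq]
    have habs : |betaL T Λ B - betaL T Λ A₀| ≤ ε' := abs_le.mpr ⟨by linarith, by linarith⟩
    linarith
end
end
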